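/- (Normal forms for the central factor.) Every C ∈ GL₂(ℂ) is gauge equivalent over O(ℂ*) to a matrix C₀ of one of the three forms: diag(ξ, ξ) (trivial form); diag(ξ₁, ξ₂) with ξ₁ ≠ ξ₂ (generic form); or [[ξ, ξ], [0, ξ]] (logarithmic form), with ξ, ξ₁, ξ₂ in the fundamental annulus C_q := {z ∈ ℂ : |q| < |z| ≤ 1}; that is, there exists Λ ∈ GL₂(O(ℂ*)) with Λ(qx) C = C₀ Λ(x) for all x ≠ 0. Moreover the normal form is unique except for the permutation of the diagonal entries in the generic form: if C₀ and C₀′ are both of one of these three forms (with spectra in C_q) and there exists Λ ∈ GL₂(O(ℂ*)) with Λ(qx) C₀ = C₀′ Λ(x) for all x ≠ 0, then C₀′ = C₀, or C₀ = diag(ξ₁, ξ₂) and C₀′ = diag(ξ₂, ξ₁) for some ξ₁ ≠ ξ₂. -/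

import Mathlib

open Matrix

/-- Entrywise holomorphy on `ℂ ∖ {0}` of a matrix-valued function. -/
def MatHolo (M : ℂ → Matrix (Fin 2) (Fin 2) ℂ) : Prop :=
  ∀ i j : Fin 2, ∀ x : ℂ, x ≠ 0 → DifferentiableAt ℂ (fun y => M y i j) x

/-- `GL₂(O(ℂ*))`: matrices holomorphic on `ℂ*` and invertible at every `x ≠ 0`. -/
def GLO (Λ : ℂ → Matrix (Fin 2) (Fin 2) ℂ) : Prop :=
  MatHolo Λ ∧ ∀ x : ℂ, x ≠ 0 → IsUnit (Λ x).det

/-- Membership in the fundamental annulus `C_q = {z : |q| < |z| ≤ 1}`. -/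
def InAnn (q z : ℂ) : Prop := ‖q‖ < ‖z‖ ∧ ‖z‖ ≤ 1

/-- The three normal forms (trivial, generic, logarithmic) with spectrum in `C_q`. -/
def NormalForm (q : ℂ) (C : Matrix (Fin 2) (Fin 2) ℂ) : Prop :=
  (∃ ξ : ℂ, InAnn q ξ ∧ C = Matrix.diagonal ![ξ, ξ]) ∨
  (∃ ξ1 ξ2 : ℂ, InAnn q ξ1 ∧ InAnn q ξ2 ∧ ξ1 ≠ ξ2 ∧ C = Matrix.diagonal ![ξ1, ξ2]) ∨
  (∃ ξ : ℂ, InAnn q ξ ∧ C = !![ξ, ξ; 0, ξ])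

/-- Gauge equivalence over `O(ℂ*)`: `Λ(qx) C = C' Λ(x)` for some `Λ ∈ GL₂(O(ℂ*))`. -/
def GaugeEq (q : ℂ) (C C' : Matrix (Fin 2) (Fin 2) ℂ) : Prop :=
  ∃ Λ : ℂ → Matrix (Fin 2) (Fin 2) ℂ, GLO Λ ∧
    ∀ x : ℂ, x ≠ 0 → Λ (q * x) * C = C' * Λ x


open Filter Asymptotics

section KeyAnalytic

variable {q : ℂ}

/-- Homogeneous q-difference equation: solutions are constant. -/
lemma keyA (hq0 : 0 < ‖q‖) (hq1 : ‖q‖ < 1) {c : ℂ}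
    (hc1 : ‖q‖ < ‖c‖) (hc2 : ‖c‖ * ‖q‖ < 1)
    {f : ℂ → ℂ} (hf : ∀ x : ℂ, x ≠ 0 → DifferentiableAt ℂ f x)
    (heq : ∀ x : ℂ, x ≠ 0 → f (q * x) = c * f x) :
    ∀ x : ℂ, x ≠ 0 → f x = f 1 := by
  have hq : q ≠ 0 := by simpa using hq0.ne'
  have hcpos : 0 < ‖c‖ := lt_trans hq0 hc1
  have hcne : c ≠ 0 := by simpa using hcpos.ne'
  -- iteration
  have hiter : ∀ n : ℕ, ∀ x : ℂ, x ≠ 0 → f (q ^ n * x) = c ^ n * f x := by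
    intro n
    induction n with
    | zero => intro x hx; simp
    | succ n ih =>
      intro x hx
      have hx' : q ^ n * x ≠ 0 := mul_ne_zero (pow_ne_zero _ hq) hx
      calc f (q ^ (n+1) * x) = f (q * (q ^ n * x)) := by ring_nf
        _ = c * f (q ^ n * x) := heq _ hx'
        _ = c * (c ^ n * f x) := by rw [ih x hx]
        _ = c ^ (n+1) * f x := by ring
  -- bound on the fundamental annulus
  obtain ⟨M, hM⟩ : ∃ M, ∀ y : ℂ, ‖q‖ ≤ ‖y‖ → ‖y‖ ≤ 1 →
      ‖(f y)‖ ≤ M := by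
    have hcpt : IsCompact {y : ℂ | ‖q‖ ≤ ‖y‖ ∧ ‖y‖ ≤ 1} := by
      refine (isCompact_closedBall (0:ℂ) 1).of_isClosed_subset ?_ ?_
      · exact (isClosed_le continuous_const continuous_norm).inter
          (isClosed_le continuous_norm continuous_const)
      · intro y hy; simpa [Complex.dist_eq] using hy.2
    have hcont : ContinuousOn f {y : ℂ | ‖q‖ ≤ ‖y‖ ∧ ‖y‖ ≤ 1} := by
      intro y hy
      have hy0 : y ≠ 0 := by
        intro h; rw [h] at hy; simp at hy; exact hq hy
      exact (hf y hy0).continuousAt.continuousWithinAt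
    obtain ⟨M, hM⟩ := hcpt.exists_bound_of_continuousOn hcont
    exact ⟨M, fun y h1 h2 => hM y ⟨h1, h2⟩⟩
  have hM0 : 0 ≤ M := le_trans (norm_nonneg _) (hM 1 (by simpa using hq1.le) (by simp))
  -- decomposition near 0
  have hsmall : ∀ x : ℂ, x ≠ 0 → ‖x‖ ≤ 1 → ∃ n : ℕ,
      ‖(f x)‖ ≤ M * ‖c‖ ^ n ∧
      ‖x‖ ≤ ‖q‖ ^ n ∧ ‖q‖ ^ (n + 1) < ‖x‖ := by
    intro x hx hx1
    have hxpos : 0 < ‖x‖ := by simpa [norm_pos_iff] using hx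
    have hex : ∃ m : ℕ, ‖q‖ ^ m < ‖x‖ :=
      exists_pow_lt_of_lt_one hxpos hq1
    classical
    set m0 := Nat.find hex with hm0
    have hm0spec : ‖q‖ ^ m0 < ‖x‖ := Nat.find_spec hex
    have hm0pos : 0 < m0 := by
      rcases Nat.eq_zero_or_pos m0 with h | h
      · exfalso; rw [h] at hm0spec; simp at hm0spec; exact absurd hx1 (not_le.mpr hm0spec)
      · exact h
    set n := m0 - 1 with hn
    have hm0n : m0 = n + 1 := (Nat.succ_pred_eq_of_pos hm0pos).symm
    have h1 : ‖q‖ ^ (n + 1) < ‖x‖ := by rw [← hm0n]; exact hm0spec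
    have h2 : ‖x‖ ≤ ‖q‖ ^ n := by
      by_contra h
      push_neg at h
      have h3 : m0 ≤ n := Nat.find_le h
      omega
    -- y := x / q^n
    set y := x / q ^ n with hy
    have hqn : (q : ℂ) ^ n ≠ 0 := pow_ne_zero _ hq
    have hy0 : y ≠ 0 := div_ne_zero hx hqn
    have hxy : x = q ^ n * y := by rw [hy]; field_simp
    have habsy : ‖y‖ = ‖x‖ / ‖q‖ ^ n := by
      simp [hy, norm_div, norm_pow]
    have hqnpos : 0 < ‖q‖ ^ n := pow_pos hq0 n
    have hy1 : ‖y‖ ≤ 1 := by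
      rw [habsy, div_le_one hqnpos]; exact h2
    have hy2 : ‖q‖ ≤ ‖y‖ := by
      rw [habsy, le_div_iff₀ hqnpos]
      calc ‖q‖ * ‖q‖ ^ n = ‖q‖ ^ (n+1) := by ring
        _ ≤ ‖x‖ := h1.le
    refine ⟨n, ?_, h2, h1⟩
    have := hiter n y hy0
    rw [← hxy] at this
    rw [this, norm_mul, norm_pow]
    calc ‖c‖ ^ n * ‖(f y)‖ ≤ ‖c‖ ^ n * M :=
      mul_le_mul_of_nonneg_left (hM y hy2 hy1) (by positivity)
      _ = M * ‖c‖ ^ n := by ring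
  -- decomposition near infinity
  have hlarge : ∀ x : ℂ, 1 < ‖x‖ → ∃ n : ℕ,
      ‖(f x)‖ * ‖c‖ ^ n ≤ M ∧
      ‖q‖ ^ n * ‖x‖ ≤ 1 ∧ ‖q‖ < ‖q‖ ^ n * ‖x‖ := by
    intro x hx1
    have hx : x ≠ 0 := by
      intro h; rw [h] at hx1; simp at hx1; linarith
    have hxpos : 0 < ‖x‖ := lt_trans one_pos hx1
    have hex : ∃ m : ℕ, ‖q‖ ^ m * ‖x‖ ≤ 1 := by
      obtain ⟨m, hm⟩ := exists_pow_lt_of_lt_one (inv_pos.mpr hxpos) hq1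
      exact ⟨m, by rw [← le_div_iff₀ hxpos] at *; exact le_of_lt (by simpa [one_div] using hm)⟩
    classical
    set n := Nat.find hex with hn
    have hnspec : ‖q‖ ^ n * ‖x‖ ≤ 1 := Nat.find_spec hex
    have hnpos : 0 < n := by
      rcases Nat.eq_zero_or_pos n with h | h
      · exfalso; rw [h] at hnspec; simp at hnspec; linarith
      · exact h
    have hmin : ¬ (‖q‖ ^ (n-1) * ‖x‖ ≤ 1) := Nat.find_min hex (by omega)
    push_neg at hmin
    have h3 : ‖q‖ < ‖q‖ ^ n * ‖x‖ := by
      have : ‖q‖ ^ n = ‖q‖ * ‖q‖ ^ (n - 1) := by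
        rw [← pow_succ']; congr 1; omega
      rw [this, mul_assoc]
      nlinarith [hmin, hq0]
    refine ⟨n, ?_, hnspec, h3⟩
    have := hiter n x hx
    have habs : ‖(f (q ^ n * x))‖ = ‖c‖ ^ n * ‖(f x)‖ := by
      rw [this, norm_mul, norm_pow]
    have hyann : ‖(f (q ^ n * x))‖ ≤ M := by
      apply hM
      · rw [norm_mul, norm_pow]; exact h3.le
      · rw [norm_mul, norm_pow]; exact hnspec
    rw [habs] at hyann; linarith [hyann]
  -- the function z * f z tends to 0 at the punctured neighborhood of 0
  have htend : Tendsto (fun z : ℂ => f z * z) (nhdsWithin 0 {(0:ℂ)}ᶜ) (nhds 0) := by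
    rw [NormedAddCommGroup.tendsto_nhds_zero]
    intro ε hε
    have hbase : 0 ≤ ‖c‖ * ‖q‖ := by positivity
    obtain ⟨N, hN⟩ : ∃ N : ℕ, M * (‖c‖ * ‖q‖) ^ N < ε := by
      have h1 := (tendsto_pow_atTop_nhds_zero_of_lt_one hbase hc2).const_mul M
      rw [mul_zero] at h1
      obtain ⟨N, hN⟩ := (h1.eventually (gt_mem_nhds hε)).exists
      exact ⟨N, hN⟩
    have hmem : {z : ℂ | ‖z‖ < ‖q‖ ^ N} ∩ {(0:ℂ)}ᶜ ∈
        nhdsWithin (0:ℂ) {(0:ℂ)}ᶜ := by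
      apply Filter.inter_mem _ self_mem_nhdsWithin
      apply nhdsWithin_le_nhds
      have : Metric.ball (0:ℂ) (‖q‖ ^ N) ∈ nhds (0:ℂ) :=
        Metric.ball_mem_nhds _ (by positivity)
      simpa [Metric.ball, Complex.dist_eq] using this
    filter_upwards [hmem] with z hz
    obtain ⟨hz1, hz2⟩ := hz
    have hz0 : z ≠ 0 := hz2
    have hzN : ‖z‖ < ‖q‖ ^ N := hz1
    have hz1' : ‖z‖ ≤ 1 := by
      calc ‖z‖ ≤ ‖q‖ ^ N := hzN.le
        _ ≤ 1 := pow_le_one₀ hq0.le hq1.le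
    obtain ⟨n, ha, hb, hc⟩ := hsmall z hz0 hz1'
    have hnN : N ≤ n := by
      by_contra h
      push_neg at h
      have : ‖q‖ ^ N ≤ ‖q‖ ^ (n + 1) :=
        pow_le_pow_of_le_one hq0.le hq1.le (by omega)
      linarith
    have : ‖(f z * z)‖ ≤ M * (‖c‖ * ‖q‖) ^ n := by
      rw [norm_mul]
      calc ‖(f z)‖ * ‖z‖ ≤ (M * ‖c‖ ^ n) * ‖q‖ ^ n := by
            apply mul_le_mul ha hb (norm_nonneg _) (by positivity)
        _ = M * (‖c‖ * ‖q‖) ^ n := by rw [mul_pow]; ring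
    have hmono : (‖c‖ * ‖q‖) ^ n ≤ (‖c‖ * ‖q‖) ^ N :=
      pow_le_pow_of_le_one hbase hc2.le hnN
    calc ‖f z * z‖ = ‖(f z * z)‖ := rfl
      _ ≤ M * (‖c‖ * ‖q‖) ^ n := this
      _ ≤ M * (‖c‖ * ‖q‖) ^ N := by nlinarith
      _ < ε := hN
  -- extend f over 0
  have hlitO : (fun z : ℂ => f z - f 0) =o[nhdsWithin 0 {(0:ℂ)}ᶜ] fun z => (z - 0)⁻¹ := by
    rw [isLittleO_iff_tendsto]
    · have h1 : Tendsto (fun z : ℂ => f z * z) (nhdsWithin 0 {(0:ℂ)}ᶜ) (nhds 0) := htend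
      have h2 : Tendsto (fun z : ℂ => f 0 * z) (nhdsWithin 0 {(0:ℂ)}ᶜ) (nhds 0) := by
        have h2' : Tendsto (fun z : ℂ => f 0 * z) (nhds 0) (nhds (f 0 * 0)) :=
          ((continuous_const (y := f 0)).mul continuous_id).tendsto 0
        rw [mul_zero] at h2'
        exact h2'.mono_left nhdsWithin_le_nhds
      have := h1.sub h2
      simp only [sub_zero] at this ⊢
      apply Tendsto.congr' _ (by simpa using this)
      filter_upwards [self_mem_nhdsWithin] with z (hz : z ≠ 0)
      field_simp
    · intro x hx
      simp only [sub_eq_zero] at hx ⊢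
      have : x = 0 := by
        by_contra h
        exact absurd hx (inv_ne_zero (by simpa using h))
      simp [this]
  have hFdiff : DifferentiableOn ℂ
      (Function.update f 0 (limUnder (nhdsWithin 0 {(0:ℂ)}ᶜ) f)) Set.univ := by
    apply Complex.differentiableOn_update_limUnder_of_isLittleO (Filter.univ_mem)
    · intro z hz
      exact (hf z (by simpa using hz.2)).differentiableWithinAt
    · simpa using hlitO
  set F := Function.update f 0 (limUnder (nhdsWithin 0 {(0:ℂ)}ᶜ) f) with hFdef
  have hFd : Differentiable ℂ F := by
    intro z
    exact (hFdiff z (Set.mem_univ z)).differentiableAt (by simp)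
  have hFf : ∀ z : ℂ, z ≠ 0 → F z = f z := fun z hz => Function.update_of_ne hz _ _
  have hFcont : Continuous F := hFd.continuous
  -- second extension: the difference quotient
  set g := fun z : ℂ => (F z - F 0) * z⁻¹ with hgdef
  have hgd : ∀ z : ℂ, z ≠ 0 → DifferentiableAt ℂ g z := by
    intro z hz
    exact ((hFd z).sub_const (F 0)).mul (differentiableAt_inv hz)
  have hg0 : g 0 = 0 := by simp [hgdef]
  have hglitO : (fun z : ℂ => g z - g 0) =o[nhdsWithin 0 {(0:ℂ)}ᶜ] fun z => (z - 0)⁻¹ := by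
    rw [isLittleO_iff_tendsto]
    · have h1 : Tendsto (fun z : ℂ => F z - F 0) (nhdsWithin 0 {(0:ℂ)}ᶜ) (nhds 0) := by
        have : Tendsto (fun z : ℂ => F z - F 0) (nhds 0) (nhds (F 0 - F 0)) :=
          (hFcont.tendsto 0).sub tendsto_const_nhds
        simpa using this.mono_left nhdsWithin_le_nhds
      apply Tendsto.congr' _ h1
      filter_upwards [self_mem_nhdsWithin] with z (hz : z ≠ 0)
      rw [hg0]
      field_simp [hgdef]
      simp [hgdef, hz]
    · intro x hx
      have : x = 0 := by
        by_contra h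
        exact absurd hx (inv_ne_zero (by simpa using h))
      simp [this, hg0]
  have hGdiff : DifferentiableOn ℂ
      (Function.update g 0 (limUnder (nhdsWithin 0 {(0:ℂ)}ᶜ) g)) Set.univ := by
    apply Complex.differentiableOn_update_limUnder_of_isLittleO (Filter.univ_mem)
    · intro z hz
      exact (hgd z (by simpa using hz.2)).differentiableWithinAt
    · simpa using hglitO
  set G := Function.update g 0 (limUnder (nhdsWithin 0 {(0:ℂ)}ᶜ) g) with hGdef
  have hGd : Differentiable ℂ G := fun z => (hGdiff z (Set.mem_univ z)).differentiableAt (by simp)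
  have hGg : ∀ z : ℂ, z ≠ 0 → G z = g z := fun z hz => Function.update_of_ne hz _ _
  -- bound for g outside a large ball
  have hgbnd : ∀ N : ℕ, ∀ z : ℂ, 1 < ‖q‖ ^ N * ‖z‖ →
      ‖(g z)‖ ≤ M / ‖q‖ * (‖q‖ / ‖c‖) ^ N
        + ‖(F 0)‖ * ‖q‖ ^ N := by
    intro N z hz
    have hqN1 : ‖q‖ ^ N ≤ 1 := pow_le_one₀ hq0.le hq1.le
    have hz1 : 1 < ‖z‖ := by nlinarith [pow_pos hq0 N]
    have hz0 : z ≠ 0 := by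
      intro h; rw [h] at hz1; simp at hz1; linarith
    have hzpos : (0:ℝ) < ‖z‖ := lt_trans one_pos hz1
    obtain ⟨n, ha, hb, hcc⟩ := hlarge z hz1
    have hnN : N ≤ n := by
      by_contra h
      push_neg at h
      have h1 : ‖q‖ ^ N ≤ ‖q‖ ^ n := pow_le_pow_of_le_one hq0.le hq1.le (by omega)
      nlinarith
    have hcn : (0:ℝ) < ‖c‖ ^ n := pow_pos hcpos n
    have habsg : ‖(g z)‖ = ‖(f z - F 0)‖ * (‖z‖)⁻¹ := by
      rw [hgdef]
      simp only [norm_mul, norm_inv]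
      rw [hFf z hz0]
    have htri : ‖(f z - F 0)‖ ≤ ‖(f z)‖ + ‖(F 0)‖ := by
      simpa using norm_sub_le (f z) (F 0)
    have h2 : (‖z‖)⁻¹ ≤ ‖q‖ ^ N := by
      have h2' : 1 * (‖z‖)⁻¹ ≤ (‖q‖ ^ N * ‖z‖) * (‖z‖)⁻¹ :=
        mul_le_mul_of_nonneg_right hz.le (by positivity)
      simpa [mul_assoc, mul_inv_cancel₀ hzpos.ne'] using h2'
    have h3 : (‖z‖)⁻¹ ≤ ‖q‖ ^ n / ‖q‖ := by
      rw [le_div_iff₀ hq0, mul_comm]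
      have h3' : ‖q‖ * (‖z‖)⁻¹ ≤ (‖q‖ ^ n * ‖z‖) * (‖z‖)⁻¹ :=
        mul_le_mul_of_nonneg_right hcc.le (by positivity)
      simpa [mul_assoc, mul_inv_cancel₀ hzpos.ne'] using h3'
    have hfz : ‖(f z)‖ ≤ M / ‖c‖ ^ n := by
      rw [le_div_iff₀ hcn]; exact ha
    have hterm1 : ‖(f z)‖ * (‖z‖)⁻¹ ≤
        M / ‖q‖ * (‖q‖ / ‖c‖) ^ N := by
      calc ‖(f z)‖ * (‖z‖)⁻¹
          ≤ (M / ‖c‖ ^ n) * (‖q‖ ^ n / ‖q‖) := by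
            apply mul_le_mul hfz h3 (by positivity) (div_nonneg hM0 hcn.le)
        _ = M / ‖q‖ * (‖q‖ / ‖c‖) ^ n := by
            have hqne : ‖q‖ ≠ 0 := hq0.ne'
            have hcne' : ‖c‖ ≠ 0 := hcpos.ne'
            rw [div_pow]
            rw [div_mul_div_comm, div_mul_div_comm]
            rw [div_eq_div_iff (by positivity) (by positivity)]
            ring
        _ ≤ M / ‖q‖ * (‖q‖ / ‖c‖) ^ N := by
            apply mul_le_mul_of_nonneg_left _ (by positivity)
            apply pow_le_pow_of_le_one (by positivity) _ hnN
            rw [div_le_one hcpos]; exact hc1.le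
    have hterm2 : ‖(F 0)‖ * (‖z‖)⁻¹ ≤ ‖(F 0)‖ * ‖q‖ ^ N :=
      mul_le_mul_of_nonneg_left h2 (norm_nonneg _)
    calc ‖(g z)‖ = ‖(f z - F 0)‖ * (‖z‖)⁻¹ := habsg
      _ ≤ (‖(f z)‖ + ‖(F 0)‖) * (‖z‖)⁻¹ :=
          mul_le_mul_of_nonneg_right htri (by positivity)
      _ = ‖(f z)‖ * (‖z‖)⁻¹ + ‖(F 0)‖ * (‖z‖)⁻¹ := by ring
      _ ≤ M / ‖q‖ * (‖q‖ / ‖c‖) ^ N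
          + ‖(F 0)‖ * ‖q‖ ^ N := add_le_add hterm1 hterm2
  -- G is bounded
  obtain ⟨K, hK⟩ : ∃ K, ∀ z : ℂ, ‖z‖ ≤ 1 → ‖(G z)‖ ≤ K := by
    obtain ⟨K, hK⟩ := (isCompact_closedBall (0:ℂ) 1).exists_bound_of_continuousOn
      hGd.continuous.continuousOn
    exact ⟨K, fun z hz => hK z (by simpa [Metric.mem_closedBall, Complex.dist_eq] using hz)⟩
  have hGbd : ∀ z : ℂ, ‖(G z)‖ ≤
      max K (M / ‖q‖ + ‖(F 0)‖) := by
    intro z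
    rcases le_or_gt (‖z‖) 1 with h | h
    · exact le_trans (hK z h) (le_max_left _ _)
    · have hz0 : z ≠ 0 := by intro hh; rw [hh] at h; simp at h; linarith
      have := hgbnd 0 z (by simpa using h)
      rw [hGg z hz0]
      refine le_trans ?_ (le_max_right _ _)
      simpa using this
  have hGconst : ∀ z : ℂ, G z = G 0 := by
    intro z
    apply hGd.apply_eq_apply_of_bounded _ z 0
    rw [isBounded_iff_forall_norm_le]
    refine ⟨max K (M / ‖q‖ + ‖(F 0)‖), ?_⟩
    rintro y ⟨z, rfl⟩
    exact hGbd z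
  have hG0 : G 0 = 0 := by
    have hub : ∀ N : ℕ, ‖(G 0)‖ ≤
        M / ‖q‖ * (‖q‖ / ‖c‖) ^ N
          + ‖(F 0)‖ * ‖q‖ ^ N := by
      intro N
      set z : ℂ := ((2 / ‖q‖ ^ N : ℝ) : ℂ) with hzdef
      have hqNpos : (0:ℝ) < ‖q‖ ^ N := pow_pos hq0 N
      have habsz : ‖z‖ = 2 / ‖q‖ ^ N := by
        rw [hzdef, Complex.norm_real, Real.norm_eq_abs, abs_of_pos (by positivity)]
      have hcond : 1 < ‖q‖ ^ N * ‖z‖ := by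
        rw [habsz]; field_simp
        norm_num
      have hz0 : z ≠ 0 := by
        intro hh
        rw [hh] at habsz; simp at habsz
        exact absurd habsz (by positivity)
      have := hgbnd N z hcond
      rw [← hGg z hz0, hGconst z] at this
      exact this
    have htendK : Tendsto (fun N : ℕ => M / ‖q‖ * (‖q‖ / ‖c‖) ^ N
        + ‖(F 0)‖ * ‖q‖ ^ N) atTop (nhds 0) := by
      have t1 : Tendsto (fun N : ℕ => (‖q‖ / ‖c‖) ^ N) atTop (nhds 0) :=
        tendsto_pow_atTop_nhds_zero_of_lt_one (by positivity) (by rw [div_lt_one hcpos]; exact hc1)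
      have t2 : Tendsto (fun N : ℕ => ‖q‖ ^ N) atTop (nhds 0) :=
        tendsto_pow_atTop_nhds_zero_of_lt_one hq0.le hq1
      have := (t1.const_mul (M / ‖q‖)).add (t2.const_mul (‖(F 0)‖))
      simpa using this
    have : ‖(G 0)‖ ≤ 0 := ge_of_tendsto htendK (Eventually.of_forall hub)
    have : ‖(G 0)‖ = 0 := le_antisymm this (norm_nonneg _)
    simpa using this
  -- conclude f is constant
  have hFconst : ∀ z : ℂ, z ≠ 0 → f z = F 0 := by
    intro z hz
    have hgz : g z = 0 := by rw [← hGg z hz, hGconst z, hG0]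
    have : (F z - F 0) * z⁻¹ = 0 := hgz
    rcases mul_eq_zero.mp this with h | h
    · rw [← hFf z hz, sub_eq_zero.mp h]
    · exact absurd h (inv_ne_zero hz)
  intro x hx
  rw [hFconst x hx, hFconst 1 one_ne_zero]

/-- If moreover `c ≠ 1`, solutions vanish. -/
lemma keyA0 (hq0 : 0 < ‖q‖) (hq1 : ‖q‖ < 1) {c : ℂ}
    (hc1 : ‖q‖ < ‖c‖) (hc2 : ‖c‖ * ‖q‖ < 1)
    (hcne1 : c ≠ 1)
    {f : ℂ → ℂ} (hf : ∀ x : ℂ, x ≠ 0 → DifferentiableAt ℂ f x)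
    (heq : ∀ x : ℂ, x ≠ 0 → f (q * x) = c * f x) :
    ∀ x : ℂ, x ≠ 0 → f x = 0 := by
  have hq : q ≠ 0 := by simpa using hq0.ne'
  have hconst := keyA hq0 hq1 hc1 hc2 hf heq
  have h1 : f (q * 1) = c * f 1 := heq 1 one_ne_zero
  rw [hconst (q * 1) (by simpa using hq)] at h1
  have : (c - 1) * f 1 = 0 := by linear_combination -h1
  rcases mul_eq_zero.mp this with h | h
  · exact absurd (by linear_combination h) hcne1
  · intro x hx; rw [hconst x hx, h]

/-- Affine equation `f(qx) = f(x) + k`: forces `k = 0` and `f` constant. -/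
lemma keyB (hq0 : 0 < ‖q‖) (hq1 : ‖q‖ < 1) {k : ℂ}
    {f : ℂ → ℂ} (hf : ∀ x : ℂ, x ≠ 0 → DifferentiableAt ℂ f x)
    (heq : ∀ x : ℂ, x ≠ 0 → f (q * x) = f x + k) :
    k = 0 ∧ ∀ x : ℂ, x ≠ 0 → f x = f 1 := by
  have hq : q ≠ 0 := by simpa using hq0.ne'
  have hk : k = 0 := by
    by_contra hk
    set r : ℝ := (1 + ‖q‖) / 2 with hr
    have hr0 : 0 < r := by positivity
    have hrq : ‖q‖ < r := by rw [hr]; linarith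
    have hr1 : r < 1 := by rw [hr]; linarith
    set lam : ℂ := (Real.log r : ℂ) / k with hlam
    set g : ℂ → ℂ := fun x => Complex.exp (lam * f x) with hg
    have hgd : ∀ x : ℂ, x ≠ 0 → DifferentiableAt ℂ g x := by
      intro x hx
      exact Complex.differentiable_exp.differentiableAt.comp x
        ((hf x hx).const_mul lam)
    have habsr : ‖((r : ℝ) : ℂ)‖ = r := by
      rw [Complex.norm_real, Real.norm_eq_abs, abs_of_pos hr0]
    have hgeq : ∀ x : ℂ, x ≠ 0 → g (q * x) = ((r : ℝ) : ℂ) * g x := by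
      intro x hx
      rw [hg]
      simp only
      rw [heq x hx, mul_add, Complex.exp_add]
      have : lam * k = (Real.log r : ℂ) := by
        rw [hlam]; field_simp
      rw [this]
      have : Complex.exp ((Real.log r : ℂ)) = ((r : ℝ) : ℂ) := by
        rw [← Complex.ofReal_exp, Real.exp_log hr0]
      rw [this]; ring
    have hzero := keyA0 hq0 hq1 (by rw [habsr]; exact hrq)
      (by rw [habsr]; nlinarith) (by
        intro h
        rw [show ((r:ℝ):ℂ) = 1 from h] at habsr
        simp at habsr
        linarith) hgd hgeq
    have := hzero 1 one_ne_zero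
    exact Complex.exp_ne_zero _ this
  refine ⟨hk, ?_⟩
  apply keyA (c := 1) hq0 hq1 (by simpa using hq1) (by simpa using hq1) hf
  intro x hx
  rw [heq x hx, hk, add_zero, one_mul]

end KeyAnalytic


/-- Every invertible 2×2 complex matrix is similar to a diagonal matrix or to
`!![l, l; 0, l]`. -/
lemma jordan2 (C : Matrix (Fin 2) (Fin 2) ℂ) (hC : C.det ≠ 0) :
    ∃ Q : Matrix (Fin 2) (Fin 2) ℂ, Q.det ≠ 0 ∧
      ((∃ l1 l2 : ℂ, l1 ≠ 0 ∧ l2 ≠ 0 ∧ C * Q = Q * Matrix.diagonal ![l1, l2]) ∨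
       (∃ l : ℂ, l ≠ 0 ∧ C * Q = Q * !![l, l; 0, l])) := by
  set a := C 0 0 with ha
  set b := C 0 1 with hb
  set c := C 1 0 with hc
  set d := C 1 1 with hd
  have hdet : C.det = a * d - b * c := by rw [Matrix.det_fin_two]
  obtain ⟨l1, l2, hsum, hprod, hchar, hchar2⟩ : ∃ l1 l2 : ℂ, l1 + l2 = a + d ∧
      l1 * l2 = a * d - b * c ∧ (l1 - a) * (l1 - d) = b * c ∧ (l2 - a) * (l2 - d) = b * c := by
    obtain ⟨s, hs⟩ : ∃ s : ℂ, s ^ 2 = (a - d) ^ 2 + 4 * b * c :=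
      IsAlgClosed.exists_pow_nat_eq _ (by norm_num)
    exact ⟨(a + d + s) / 2, (a + d - s) / 2, by ring,
      by linear_combination (-1/4 : ℂ) * hs,
      by linear_combination (1/4 : ℂ) * hs,
      by linear_combination (1/4 : ℂ) * hs⟩
  have hl1ne : l1 ≠ 0 := by
    intro h; rw [h, zero_mul] at hprod; rw [hdet, ← hprod] at hC; exact hC rfl
  have hl2ne : l2 ≠ 0 := by
    intro h; rw [h, mul_zero] at hprod; rw [hdet, ← hprod] at hC; exact hC rfl
  by_cases hB : C = l1 • (1 : Matrix (Fin 2) (Fin 2) ℂ)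
  · refine ⟨1, by simp, Or.inl ⟨l1, l1, hl1ne, hl1ne, ?_⟩⟩
    rw [hB]
    ext i j
    fin_cases i <;> fin_cases j <;>
      simp [Matrix.mul_apply, Fin.sum_univ_two, Matrix.diagonal, Matrix.one_apply]
  · -- eigenvector v for l1
    obtain ⟨v0, v1, hv0, hv1, hvne⟩ : ∃ v0 v1 : ℂ,
        a * v0 + b * v1 = l1 * v0 ∧ c * v0 + d * v1 = l1 * v1 ∧ ¬(v0 = 0 ∧ v1 = 0) := by
      by_cases hv : b = 0 ∧ l1 - a = 0
      · refine ⟨l1 - d, c, by linear_combination -hchar, by ring, ?_⟩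
        rintro ⟨h1, h2⟩
        apply hB
        have haz : a = l1 := by linear_combination -hv.2
        have hdz : d = l1 := by linear_combination -h1
        ext i j
        fin_cases i <;> fin_cases j <;>
          simp [Matrix.one_apply, ← ha, ← hb, ← hc, ← hd, haz, hv.1, h2, hdz]
      · refine ⟨b, l1 - a, by ring, by linear_combination -hchar, fun h => hv ⟨h.1, h.2⟩⟩
    by_cases hll : l1 = l2
    · -- double eigenvalue, non-scalar: logarithmic block
      have hAD : a + d = 2 * l1 := by rw [hll] at hsum ⊢; linear_combination -hsum
      obtain ⟨u0, u1, w0, w1, hu0, hu1, hw0, hw1, hdet'⟩ : ∃ u0 u1 w0 w1 : ℂ,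
          a * u0 + b * u1 = l1 * u0 + w0 ∧ c * u0 + d * u1 = l1 * u1 + w1 ∧
          a * w0 + b * w1 = l1 * w0 ∧ c * w0 + d * w1 = l1 * w1 ∧
          w0 * u1 - w1 * u0 ≠ 0 := by
        by_cases hcz : c ≠ 0
        · refine ⟨1, 0, a - l1, c, by ring, by ring, ?_, ?_, by simpa using hcz⟩
          · linear_combination -hchar + (a - l1) * hAD
          · linear_combination c * hAD
        · push_neg at hcz
          by_cases hbz : b ≠ 0
          · refine ⟨0, 1, b, d - l1, by ring, by ring, ?_, ?_, by simpa using hbz⟩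
            · linear_combination b * hAD
            · linear_combination -hchar + (d - l1) * hAD
          · push_neg at hbz
            exfalso
            apply hB
            have h2 : (l1 - a) * (l1 - a) = 0 := by
              linear_combination -hchar - (l1 - a) * hAD - b * hcz
            have haz : a = l1 := by linear_combination -(mul_self_eq_zero.mp h2)
            have hdz : d = l1 := by linear_combination hAD - haz
            ext i j
            fin_cases i <;> fin_cases j <;>
              simp [Matrix.one_apply, ← ha, ← hb, ← hc, ← hd, haz, hbz, hcz, hdz]
      refine ⟨!![w0, l1 * u0; w1, l1 * u1], ?_, Or.inr ⟨l1, hl1ne, ?_⟩⟩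
      · rw [Matrix.det_fin_two_of]
        intro h
        have h' : l1 * (w0 * u1 - w1 * u0) = 0 := by linear_combination h
        rcases mul_eq_zero.mp h' with h'' | h''
        · exact hl1ne h''
        · exact hdet' h''
      · have hCm : C = !![a, b; c, d] := Matrix.eta_fin_two C
        rw [hCm, Matrix.mul_fin_two, Matrix.mul_fin_two]
        ext i j
        fin_cases i <;> fin_cases j
        · simp only []; simp; linear_combination hw0
        · simp; linear_combination l1 * hu0
        · simp; linear_combination hw1
        · simp; linear_combination l1 * hu1
    · -- distinct eigenvalues: diagonal form
      have hBne2 : ¬ (C = l2 • (1 : Matrix (Fin 2) (Fin 2) ℂ)) := by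
        intro h
        apply hll
        have haz : a = l2 := by rw [ha, h]; simp
        have hdz : d = l2 := by rw [hd, h]; simp
        have hbz : b = 0 := by rw [hb, h]; simp
        have hcz : c = 0 := by rw [hc, h]; simp
        rw [haz, hdz, hbz, hcz] at hchar
        have h2 : (l1 - l2) * (l1 - l2) = 0 := by linear_combination hchar
        linear_combination mul_self_eq_zero.mp h2
      obtain ⟨w0, w1, hw0, hw1, hwne⟩ : ∃ w0 w1 : ℂ,
          a * w0 + b * w1 = l2 * w0 ∧ c * w0 + d * w1 = l2 * w1 ∧ ¬(w0 = 0 ∧ w1 = 0) := by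
        by_cases hv : b = 0 ∧ l2 - a = 0
        · refine ⟨l2 - d, c, by linear_combination -hchar2, by ring, ?_⟩
          rintro ⟨h1, h2⟩
          apply hBne2
          have haz : a = l2 := by linear_combination -hv.2
          have hdz : d = l2 := by linear_combination -h1
          ext i j
          fin_cases i <;> fin_cases j <;>
            simp [Matrix.one_apply, ← ha, ← hb, ← hc, ← hd, haz, hv.1, h2, hdz]
        · refine ⟨b, l2 - a, by ring, by linear_combination -hchar2, fun h => hv ⟨h.1, h.2⟩⟩
      have hdet' : v0 * w1 - v1 * w0 ≠ 0 := by
        intro h5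
        have e1 : (l1 - l2) * (v0 * w0) = 0 := by
          linear_combination v0 * hw0 - w0 * hv0 - b * h5
        have e2 : (l1 - l2) * (v0 * w1) = 0 := by
          linear_combination v1 * hw0 - w1 * hv0 + (a - l2) * h5
        have e3 : (l1 - l2) * (v1 * w0) = 0 := by
          linear_combination v0 * hw1 - w0 * hv1 + (l2 - d) * h5
        have e4 : (l1 - l2) * (v1 * w1) = 0 := by
          linear_combination v1 * hw1 - w1 * hv1 + c * h5
        have hlldiff : l1 - l2 ≠ 0 := sub_ne_zero.mpr hll
        have p1 := (mul_eq_zero.mp e1).resolve_left hlldiff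
        have p2 := (mul_eq_zero.mp e2).resolve_left hlldiff
        have p3 := (mul_eq_zero.mp e3).resolve_left hlldiff
        have p4 := (mul_eq_zero.mp e4).resolve_left hlldiff
        rcases not_and_or.mp hvne with h | h
        · rcases not_and_or.mp hwne with g | g
          · exact g ((mul_eq_zero.mp p1).resolve_left h)
          · exact g ((mul_eq_zero.mp p2).resolve_left h)
        · rcases not_and_or.mp hwne with g | g
          · exact g ((mul_eq_zero.mp p3).resolve_left h)
          · exact g ((mul_eq_zero.mp p4).resolve_left h)
      refine ⟨!![v0, w0; v1, w1], ?_, Or.inl ⟨l1, l2, hl1ne, hl2ne, ?_⟩⟩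
      · rw [Matrix.det_fin_two_of]
        intro h
        exact hdet' (by linear_combination h)
      · have hCm : C = !![a, b; c, d] := Matrix.eta_fin_two C
        have hD : (Matrix.diagonal ![l1, l2] : Matrix (Fin 2) (Fin 2) ℂ) = !![l1, 0; 0, l2] := by
          ext i j
          fin_cases i <;> fin_cases j <;> simp [Matrix.diagonal_apply]
        rw [hCm, hD, Matrix.mul_fin_two, Matrix.mul_fin_two]
        ext i j
        fin_cases i <;> fin_cases j
        · simp; linear_combination hv0
        · simp; linear_combination hw0
        · simp; linear_combination hv1
        · simp; linear_combination hw1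

/-- Normalize a nonzero eigenvalue into the fundamental annulus. -/
lemma norm_ann {q : ℂ} (hq0 : 0 < ‖q‖) (hq1 : ‖q‖ < 1) {l : ℂ}
    (hl : l ≠ 0) : ∃ n : ℤ, InAnn q (q ^ n * l) := by
  have hq : q ≠ 0 := by simpa using hq0.ne'
  set A := ‖q‖ with hA
  set B := ‖l‖ with hB
  have hB0 : 0 < B := by simpa [hB, norm_pos_iff] using hl
  have hL : Real.log A < 0 := Real.log_neg hq0 hq1
  set u : ℝ := -Real.log B / Real.log A with hu
  have huL : u * Real.log A = -Real.log B := by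
    rw [hu]; field_simp [hL.ne]
  have hpos : (0:ℝ) < A ^ (⌈u⌉ : ℤ) * B := by positivity
  refine ⟨⌈u⌉, ?_, ?_⟩ <;>
    rw [norm_mul, norm_zpow]
  · -- A < A^n * B
    have h1 : (⌈u⌉ : ℝ) < u + 1 := Int.ceil_lt_add_one u
    have key : Real.log A < (⌈u⌉ : ℝ) * Real.log A + Real.log B := by
      nlinarith [mul_lt_mul_of_neg_right h1 hL]
    show A < A ^ (⌈u⌉ : ℤ) * B
    conv_lhs => rw [← Real.exp_log hq0]
    conv_rhs => rw [← Real.exp_log hpos]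
    apply Real.exp_lt_exp.mpr
    rw [Real.log_mul (by positivity) hB0.ne', Real.log_zpow]
    exact key
  · -- A^n * B ≤ 1
    have h2 : u ≤ (⌈u⌉ : ℝ) := Int.le_ceil u
    have key : (⌈u⌉ : ℝ) * Real.log A + Real.log B ≤ 0 := by
      nlinarith [mul_le_mul_of_nonpos_right h2 hL.le]
    show A ^ (⌈u⌉ : ℤ) * B ≤ 1
    conv_lhs => rw [← Real.exp_log hpos]
    rw [show (1:ℝ) = Real.exp 0 by rw [Real.exp_zero]]
    apply Real.exp_le_exp.mpr
    rw [Real.log_mul (by positivity) hB0.ne', Real.log_zpow]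
    exact key

lemma inv_intertwine {C Q N : Matrix (Fin 2) (Fin 2) ℂ} (hQ : IsUnit Q.det)
    (h : C * Q = Q * N) : Q⁻¹ * C = N * Q⁻¹ := by
  calc Q⁻¹ * C = Q⁻¹ * C * (Q * Q⁻¹) := by rw [Matrix.mul_nonsing_inv Q hQ, mul_one]
    _ = Q⁻¹ * (C * Q) * Q⁻¹ := by rw [← mul_assoc, mul_assoc (Q⁻¹) C Q]
    _ = Q⁻¹ * Q * N * Q⁻¹ := by rw [h, ← mul_assoc]
    _ = N * Q⁻¹ := by rw [Matrix.nonsing_inv_mul Q hQ, one_mul]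

/-- Existence part. -/
lemma existence13 {q : ℂ} (hq0 : 0 < ‖q‖) (hq1 : ‖q‖ < 1)
    (C : Matrix (Fin 2) (Fin 2) ℂ) (hC : IsUnit C.det) :
    ∃ C0, NormalForm q C0 ∧ GaugeEq q C C0 := by
  have hq : q ≠ 0 := by simpa using hq0.ne'
  obtain ⟨Q, hQdet, hcase⟩ := jordan2 C (by simpa [isUnit_iff_ne_zero] using hC)
  have hQu : IsUnit Q.det := isUnit_iff_ne_zero.mpr hQdet
  have hPdet : Q⁻¹.det ≠ 0 := by
    rw [Matrix.det_nonsing_inv, Ring.inverse_eq_inv']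
    exact inv_ne_zero hQdet
  set P := Q⁻¹ with hP
  rcases hcase with ⟨l1, l2, hl1, hl2, h⟩ | ⟨l, hl, h⟩
  · -- diagonalizable case
    have hPC : P * C = Matrix.diagonal ![l1, l2] * P := inv_intertwine hQu h
    obtain ⟨n1, hn1⟩ := norm_ann hq0 hq1 hl1
    obtain ⟨n2, hn2⟩ := norm_ann hq0 hq1 hl2
    set ξ1 := q ^ n1 * l1 with hξ1
    set ξ2 := q ^ n2 * l2 with hξ2
    refine ⟨Matrix.diagonal ![ξ1, ξ2], ?_, ?_⟩
    · by_cases he : ξ1 = ξ2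
      · exact Or.inl ⟨ξ1, hn1, by rw [he]⟩
      · exact Or.inr (Or.inl ⟨ξ1, ξ2, hn1, hn2, he, rfl⟩)
    · refine ⟨fun x => Matrix.diagonal ![x ^ n1, x ^ n2] * P, ⟨?_, ?_⟩, ?_⟩
      · intro i j x hx
        have hfun : (fun y : ℂ => (Matrix.diagonal ![y ^ n1, y ^ n2] * P) i j)
            = fun y : ℂ => ![y ^ n1, y ^ n2] i * P i j := by
          funext y; rw [Matrix.diagonal_mul]
        rw [hfun]
        fin_cases i <;> simp only [Matrix.cons_val_zero, Matrix.cons_val_one, Matrix.head_cons] <;>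
          exact (differentiableAt_zpow.mpr (Or.inl hx)).mul_const _
      · intro x hx
        rw [Matrix.det_mul, Matrix.det_diagonal]
        apply IsUnit.mul _ (isUnit_iff_ne_zero.mpr hPdet)
        rw [isUnit_iff_ne_zero, Fin.prod_univ_two]
        simp only [Matrix.cons_val_zero, Matrix.cons_val_one, Matrix.head_cons]
        exact mul_ne_zero (zpow_ne_zero _ hx) (zpow_ne_zero _ hx)
      · intro x hx
        calc Matrix.diagonal ![(q*x) ^ n1, (q*x) ^ n2] * P * C
            = Matrix.diagonal ![(q*x) ^ n1, (q*x) ^ n2] * (Matrix.diagonal ![l1, l2] * P) := by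
              rw [mul_assoc, hPC]
          _ = Matrix.diagonal ![ξ1, ξ2] * (Matrix.diagonal ![x ^ n1, x ^ n2] * P) := by
              have hvec : (fun i => (![(q*x) ^ n1, (q*x) ^ n2] : Fin 2 → ℂ) i * ![l1, l2] i)
                  = (fun i => (![ξ1, ξ2] : Fin 2 → ℂ) i * ![x ^ n1, x ^ n2] i) := by
                funext i
                fin_cases i <;>
                  · simp [hξ1, hξ2]
                    rw [mul_zpow]
                    ring
              rw [← mul_assoc, ← mul_assoc, Matrix.diagonal_mul_diagonal,
                Matrix.diagonal_mul_diagonal, hvec]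
  · -- logarithmic case
    have hPC : P * C = !![l, l; 0, l] * P := inv_intertwine hQu h
    obtain ⟨n, hn⟩ := norm_ann hq0 hq1 hl
    set ξ := q ^ n * l with hξ
    refine ⟨!![ξ, ξ; 0, ξ], Or.inr (Or.inr ⟨ξ, hn, rfl⟩), ?_⟩
    refine ⟨fun x => (x ^ n : ℂ) • P, ⟨?_, ?_⟩, ?_⟩
    · intro i j x hx
      have hfun : (fun y : ℂ => ((y ^ n : ℂ) • P) i j) = fun y : ℂ => y ^ n * P i j := by
        funext y; simp [Matrix.smul_apply]
      rw [hfun]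
      exact (differentiableAt_zpow.mpr (Or.inl hx)).mul_const _
    · intro x hx
      rw [Matrix.det_smul]
      rw [isUnit_iff_ne_zero]
      apply mul_ne_zero (pow_ne_zero _ (zpow_ne_zero _ hx)) hPdet
    · intro x hx
      have hC0 : !![ξ, ξ; 0, ξ] = (q ^ n : ℂ) • !![l, l; 0, l] := by
        ext i j
        fin_cases i <;> fin_cases j <;> simp [hξ]
      calc ((q * x) ^ n : ℂ) • P * C = ((q * x) ^ n : ℂ) • (P * C) := by
            rw [Matrix.smul_mul]
        _ = ((q ^ n * x ^ n : ℂ)) • (!![l, l; 0, l] * P) := by rw [hPC, mul_zpow]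
        _ = !![ξ, ξ; 0, ξ] * ((x ^ n : ℂ) • P) := by
            rw [hC0, Matrix.mul_smul, Matrix.smul_mul, smul_smul, mul_comm (x ^ n) (q ^ n)]

section Helpers13
variable {q : ℂ}

lemma ann_ne (hq0 : 0 < ‖q‖) {ξ : ℂ} (hξ : InAnn q ξ) : ξ ≠ 0 := by
  intro h
  rw [h] at hξ
  simpa using lt_trans hq0 hξ.1

/-- entry equation with distinct multipliers forces vanishing -/
lemma entry_zero (hq0 : 0 < ‖q‖) (hq1 : ‖q‖ < 1) {ξ η : ℂ} (hξ : InAnn q ξ) (hη : InAnn q η) (hne : η ≠ ξ)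
    {f : ℂ → ℂ} (hf : ∀ x : ℂ, x ≠ 0 → DifferentiableAt ℂ f x)
    (he : ∀ x : ℂ, x ≠ 0 → f (q * x) * ξ = η * f x) :
    ∀ x : ℂ, x ≠ 0 → f x = 0 := by
  have hξ0 : ξ ≠ 0 := ann_ne hq0 hξ
  have hη0 : η ≠ 0 := ann_ne hq0 hη
  have hξpos : 0 < ‖ξ‖ := by simpa [norm_pos_iff] using hξ0
  have hηpos : 0 < ‖η‖ := by simpa [norm_pos_iff] using hη0
  apply keyA0 hq0 hq1 (c := η / ξ)
  · rw [norm_div, lt_div_iff₀ hξpos]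
    nlinarith [hξ.2, hη.1, hq0]
  · rw [norm_div, div_mul_eq_mul_div, div_lt_one hξpos]
    nlinarith [hη.2, hξ.1, hq0]
  · intro h
    exact hne (by field_simp at h; exact h)
  · exact hf
  · intro x hx
    rw [div_mul_eq_mul_div, eq_div_iff hξ0]
    exact he x hx

lemma entry_const (hq0 : 0 < ‖q‖) (hq1 : ‖q‖ < 1) {ξ : ℂ} (hξ : InAnn q ξ)
    {f : ℂ → ℂ} (hf : ∀ x : ℂ, x ≠ 0 → DifferentiableAt ℂ f x)
    (he : ∀ x : ℂ, x ≠ 0 → f (q * x) * ξ = ξ * f x) :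
    ∀ x : ℂ, x ≠ 0 → f x = f 1 := by
  have hξ0 : ξ ≠ 0 := ann_ne hq0 hξ
  apply keyA (c := 1) hq0 hq1 (by simpa using hq1) (by simpa using hq1) hf
  intro x hx
  rw [one_mul]
  have h : f (q * x) * ξ = f x * ξ := by rw [he x hx]; ring
  exact mul_right_cancel₀ hξ0 h

lemma entry_affine (hq0 : 0 < ‖q‖) (hq1 : ‖q‖ < 1) {ξ k : ℂ} (hξ : InAnn q ξ)
    {f : ℂ → ℂ} (hf : ∀ x : ℂ, x ≠ 0 → DifferentiableAt ℂ f x)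
    (he : ∀ x : ℂ, x ≠ 0 → f (q * x) * ξ = ξ * f x + ξ * k) :
    k = 0 := by
  have hξ0 : ξ ≠ 0 := ann_ne hq0 hξ
  refine (keyB hq0 hq1 hf ?_).1
  intro x hx
  have h := he x hx
  have : f (q * x) * ξ = (f x + k) * ξ := by rw [h]; ring
  exact mul_right_cancel₀ hξ0 this

lemma dd (hq0 : 0 < ‖q‖) (hq1 : ‖q‖ < 1) {σ1 σ2 τ1 τ2 : ℂ}
    (h1 : InAnn q σ1) (h2 : InAnn q σ2) (h3 : InAnn q τ1) (h4 : InAnn q τ2)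
    {Λ : ℂ → Matrix (Fin 2) (Fin 2) ℂ} (hΛ : GLO Λ)
    (heq : ∀ x : ℂ, x ≠ 0 →
      Λ (q * x) * Matrix.diagonal ![σ1, σ2] = Matrix.diagonal ![τ1, τ2] * Λ x) :
    (τ1 = σ1 ∧ τ2 = σ2) ∨ (τ1 = σ2 ∧ τ2 = σ1) := by
  obtain ⟨hHolo, hUnit⟩ := hΛ
  have hdet : Λ 1 0 0 * Λ 1 1 1 - Λ 1 0 1 * Λ 1 1 0 ≠ 0 := by
    have h := hUnit 1 one_ne_zero
    rwa [isUnit_iff_ne_zero, Matrix.det_fin_two] at h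
  have hE : ∀ (i j : Fin 2), ∀ x : ℂ, x ≠ 0 →
      Λ (q * x) i j * (![σ1, σ2] j) = (![τ1, τ2] i) * Λ x i j := by
    intro i j x hx
    have h := congrFun (congrFun (heq x hx) i) j
    simpa [Matrix.mul_diagonal, Matrix.diagonal_mul] using h
  have hEa : ∀ x : ℂ, x ≠ 0 → Λ (q * x) 0 0 * σ1 = τ1 * Λ x 0 0 :=
    fun x hx => by simpa using hE 0 0 x hx
  have hEb : ∀ x : ℂ, x ≠ 0 → Λ (q * x) 0 1 * σ2 = τ1 * Λ x 0 1 :=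
    fun x hx => by simpa using hE 0 1 x hx
  have hEc : ∀ x : ℂ, x ≠ 0 → Λ (q * x) 1 0 * σ1 = τ2 * Λ x 1 0 :=
    fun x hx => by simpa using hE 1 0 x hx
  have hEd : ∀ x : ℂ, x ≠ 0 → Λ (q * x) 1 1 * σ2 = τ2 * Λ x 1 1 :=
    fun x hx => by simpa using hE 1 1 x hx
  have p1 : τ1 ≠ σ1 → Λ 1 0 0 = 0 :=
    fun hne => entry_zero hq0 hq1 h1 h3 hne (hHolo 0 0) hEa 1 one_ne_zero
  have p2 : τ1 ≠ σ2 → Λ 1 0 1 = 0 :=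
    fun hne => entry_zero hq0 hq1 h2 h3 hne (hHolo 0 1) hEb 1 one_ne_zero
  have p3 : τ2 ≠ σ1 → Λ 1 1 0 = 0 :=
    fun hne => entry_zero hq0 hq1 h1 h4 hne (hHolo 1 0) hEc 1 one_ne_zero
  have p4 : τ2 ≠ σ2 → Λ 1 1 1 = 0 :=
    fun hne => entry_zero hq0 hq1 h2 h4 hne (hHolo 1 1) hEd 1 one_ne_zero
  by_cases e1 : τ1 = σ1
  · by_cases e2 : τ2 = σ2
    · exact Or.inl ⟨e1, e2⟩
    · have hd := p4 e2
      have hb : Λ 1 0 1 ≠ 0 := fun h => hdet (by rw [hd, h]; ring)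
      have hc : Λ 1 1 0 ≠ 0 := fun h => hdet (by rw [hd, h]; ring)
      exact Or.inr ⟨by_contra fun h => hb (p2 h), by_contra fun h => hc (p3 h)⟩
  · have ha := p1 e1
    have hb : Λ 1 0 1 ≠ 0 := fun h => hdet (by rw [ha, h]; ring)
    have hc : Λ 1 1 0 ≠ 0 := fun h => hdet (by rw [ha, h]; ring)
    exact Or.inr ⟨by_contra fun h => hb (p2 h), by_contra fun h => hc (p3 h)⟩

lemma dl (hq0 : 0 < ‖q‖) (hq1 : ‖q‖ < 1) {σ1 σ2 η : ℂ}
    (h1 : InAnn q σ1) (h2 : InAnn q σ2) (hη : InAnn q η)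
    {Λ : ℂ → Matrix (Fin 2) (Fin 2) ℂ} (hΛ : GLO Λ)
    (heq : ∀ x : ℂ, x ≠ 0 →
      Λ (q * x) * Matrix.diagonal ![σ1, σ2] = !![η, η; 0, η] * Λ x) :
    False := by
  have hq : q ≠ 0 := by simpa using hq0.ne'
  obtain ⟨hHolo, hUnit⟩ := hΛ
  have hdet : Λ 1 0 0 * Λ 1 1 1 - Λ 1 0 1 * Λ 1 1 0 ≠ 0 := by
    have h := hUnit 1 one_ne_zero
    rwa [isUnit_iff_ne_zero, Matrix.det_fin_two] at h
  have hE : ∀ (i j : Fin 2), ∀ x : ℂ, x ≠ 0 →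
      (Λ (q * x) * Matrix.diagonal ![σ1, σ2]) i j = (!![η, η; 0, η] * Λ x) i j :=
    fun i j x hx => by rw [heq x hx]
  have hEa : ∀ x : ℂ, x ≠ 0 → Λ (q * x) 0 0 * σ1 = η * Λ x 0 0 + η * Λ x 1 0 :=
    by intro x hx; simpa [Matrix.mul_diagonal, Matrix.mul_apply, Fin.sum_univ_two] using hE 0 0 x hx
  have hEb : ∀ x : ℂ, x ≠ 0 → Λ (q * x) 0 1 * σ2 = η * Λ x 0 1 + η * Λ x 1 1 :=
    by intro x hx; simpa [Matrix.mul_diagonal, Matrix.mul_apply, Fin.sum_univ_two] using hE 0 1 x hx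
  have hEc : ∀ x : ℂ, x ≠ 0 → Λ (q * x) 1 0 * σ1 = η * Λ x 1 0 :=
    by intro x hx; simpa [Matrix.mul_diagonal, Matrix.mul_apply, Fin.sum_univ_two] using hE 1 0 x hx
  have hEd : ∀ x : ℂ, x ≠ 0 → Λ (q * x) 1 1 * σ2 = η * Λ x 1 1 :=
    by intro x hx; simpa [Matrix.mul_diagonal, Matrix.mul_apply, Fin.sum_univ_two] using hE 1 1 x hx
  have hc1 : Λ 1 1 0 = 0 := by
    by_cases e : η = σ1
    · have hcc := entry_const hq0 hq1 h1 (hHolo 1 0)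
        (fun x hx => by have h := hEc x hx; rw [e] at h; exact h)
      apply entry_affine hq0 hq1 h1 (hHolo 0 0) (k := Λ 1 1 0)
      intro x hx
      have h := hEa x hx
      rw [e, hcc x hx] at h
      exact h
    · exact entry_zero hq0 hq1 h1 hη e (hHolo 1 0) hEc 1 one_ne_zero
  have hd1 : Λ 1 1 1 = 0 := by
    by_cases e : η = σ2
    · have hcc := entry_const hq0 hq1 h2 (hHolo 1 1)
        (fun x hx => by have h := hEd x hx; rw [e] at h; exact h)
      apply entry_affine hq0 hq1 h2 (hHolo 0 1) (k := Λ 1 1 1)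
      intro x hx
      have h := hEb x hx
      rw [e, hcc x hx] at h
      exact h
    · exact entry_zero hq0 hq1 h2 hη e (hHolo 1 1) hEd 1 one_ne_zero
  exact hdet (by rw [hc1, hd1]; ring)

lemma ld (hq0 : 0 < ‖q‖) (hq1 : ‖q‖ < 1) {ξ τ1 τ2 : ℂ}
    (hξ : InAnn q ξ) (h3 : InAnn q τ1) (h4 : InAnn q τ2)
    {Λ : ℂ → Matrix (Fin 2) (Fin 2) ℂ} (hΛ : GLO Λ)
    (heq : ∀ x : ℂ, x ≠ 0 →
      Λ (q * x) * !![ξ, ξ; 0, ξ] = Matrix.diagonal ![τ1, τ2] * Λ x) :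
    False := by
  have hq : q ≠ 0 := by simpa using hq0.ne'
  obtain ⟨hHolo, hUnit⟩ := hΛ
  have hdet : Λ 1 0 0 * Λ 1 1 1 - Λ 1 0 1 * Λ 1 1 0 ≠ 0 := by
    have h := hUnit 1 one_ne_zero
    rwa [isUnit_iff_ne_zero, Matrix.det_fin_two] at h
  have hE : ∀ (i j : Fin 2), ∀ x : ℂ, x ≠ 0 →
      (Λ (q * x) * !![ξ, ξ; 0, ξ]) i j = (Matrix.diagonal ![τ1, τ2] * Λ x) i j :=
    fun i j x hx => by rw [heq x hx]
  have hEa : ∀ x : ℂ, x ≠ 0 → Λ (q * x) 0 0 * ξ = τ1 * Λ x 0 0 :=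
    by intro x hx; simpa [Matrix.diagonal_mul, Matrix.mul_apply, Fin.sum_univ_two] using hE 0 0 x hx
  have hEb : ∀ x : ℂ, x ≠ 0 → Λ (q * x) 0 0 * ξ + Λ (q * x) 0 1 * ξ = τ1 * Λ x 0 1 :=
    by intro x hx; simpa [Matrix.diagonal_mul, Matrix.mul_apply, Fin.sum_univ_two] using hE 0 1 x hx
  have hEc : ∀ x : ℂ, x ≠ 0 → Λ (q * x) 1 0 * ξ = τ2 * Λ x 1 0 :=
    by intro x hx; simpa [Matrix.diagonal_mul, Matrix.mul_apply, Fin.sum_univ_two] using hE 1 0 x hx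
  have hEd : ∀ x : ℂ, x ≠ 0 → Λ (q * x) 1 0 * ξ + Λ (q * x) 1 1 * ξ = τ2 * Λ x 1 1 :=
    by intro x hx; simpa [Matrix.diagonal_mul, Matrix.mul_apply, Fin.sum_univ_two] using hE 1 1 x hx
  have ha1 : Λ 1 0 0 = 0 := by
    by_cases e : τ1 = ξ
    · have hacc := entry_const hq0 hq1 hξ (hHolo 0 0)
        (fun x hx => by have h := hEa x hx; rw [e] at h; exact h)
      have hk := entry_affine hq0 hq1 hξ (hHolo 0 1) (k := -Λ 1 0 0) (by
        intro x hx
        have h := hEb x hx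
        rw [e, hacc (q * x) (mul_ne_zero hq hx)] at h
        linear_combination h)
      linear_combination -hk
    · exact entry_zero hq0 hq1 hξ h3 e (hHolo 0 0) hEa 1 one_ne_zero
  have hc1 : Λ 1 1 0 = 0 := by
    by_cases e : τ2 = ξ
    · have hacc := entry_const hq0 hq1 hξ (hHolo 1 0)
        (fun x hx => by have h := hEc x hx; rw [e] at h; exact h)
      have hk := entry_affine hq0 hq1 hξ (hHolo 1 1) (k := -Λ 1 1 0) (by
        intro x hx
        have h := hEd x hx
        rw [e, hacc (q * x) (mul_ne_zero hq hx)] at h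
        linear_combination h)
      linear_combination -hk
    · exact entry_zero hq0 hq1 hξ h4 e (hHolo 1 0) hEc 1 one_ne_zero
  exact hdet (by rw [ha1, hc1]; ring)

lemma ll (hq0 : 0 < ‖q‖) (hq1 : ‖q‖ < 1) {ξ η : ℂ}
    (hξ : InAnn q ξ) (hη : InAnn q η)
    {Λ : ℂ → Matrix (Fin 2) (Fin 2) ℂ} (hΛ : GLO Λ)
    (heq : ∀ x : ℂ, x ≠ 0 → Λ (q * x) * !![ξ, ξ; 0, ξ] = !![η, η; 0, η] * Λ x) :
    η = ξ := by
  have hq : q ≠ 0 := by simpa using hq0.ne'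
  obtain ⟨hHolo, hUnit⟩ := hΛ
  have hdet : Λ 1 0 0 * Λ 1 1 1 - Λ 1 0 1 * Λ 1 1 0 ≠ 0 := by
    have h := hUnit 1 one_ne_zero
    rwa [isUnit_iff_ne_zero, Matrix.det_fin_two] at h
  have hE : ∀ (i j : Fin 2), ∀ x : ℂ, x ≠ 0 →
      (Λ (q * x) * !![ξ, ξ; 0, ξ]) i j = (!![η, η; 0, η] * Λ x) i j :=
    fun i j x hx => by rw [heq x hx]
  have hEc : ∀ x : ℂ, x ≠ 0 → Λ (q * x) 1 0 * ξ = η * Λ x 1 0 :=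
    fun x hx => by simpa [Matrix.mul_apply, Fin.sum_univ_two] using hE 1 0 x hx
  have hEd : ∀ x : ℂ, x ≠ 0 →
      Λ (q * x) 1 0 * ξ + Λ (q * x) 1 1 * ξ = η * Λ x 1 1 :=
    fun x hx => by simpa [Matrix.mul_apply, Fin.sum_univ_two] using hE 1 1 x hx
  by_contra e
  have hc0 := entry_zero hq0 hq1 hξ hη e (hHolo 1 0) hEc
  have hEd' : ∀ x : ℂ, x ≠ 0 → Λ (q * x) 1 1 * ξ = η * Λ x 1 1 := by
    intro x hx
    have h := hEd x hx
    rw [hc0 (q * x) (mul_ne_zero hq hx)] at h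
    linear_combination h
  have hd0 := entry_zero hq0 hq1 hξ hη e (hHolo 1 1) hEd'
  exact hdet (by rw [hc0 1 one_ne_zero, hd0 1 one_ne_zero]; ring)

/-- Uniqueness part. -/
lemma uniqueness13 {q : ℂ} (hq0 : 0 < ‖q‖) (hq1 : ‖q‖ < 1)
    (C0 C0' : Matrix (Fin 2) (Fin 2) ℂ) (h1 : NormalForm q C0) (h2 : NormalForm q C0')
    (h3 : GaugeEq q C0 C0') :
    C0' = C0 ∨ ∃ ξ1 ξ2 : ℂ, ξ1 ≠ ξ2 ∧ C0 = Matrix.diagonal ![ξ1, ξ2] ∧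
      C0' = Matrix.diagonal ![ξ2, ξ1] := by
  obtain ⟨Λ, hΛ, heq⟩ := h3
  rcases h1 with ⟨ξ, hξ, rfl⟩ | ⟨ξ1, ξ2, hξ1, hξ2, hne, rfl⟩ | ⟨ξ, hξ, rfl⟩
  · rcases h2 with ⟨η, hη, rfl⟩ | ⟨η1, η2, hη1, hη2, hne', rfl⟩ | ⟨η, hη, rfl⟩
    · rcases dd hq0 hq1 hξ hξ hη hη hΛ heq with ⟨e, _⟩ | ⟨e, _⟩ <;>
        exact Or.inl (by rw [e])
    · rcases dd hq0 hq1 hξ hξ hη1 hη2 hΛ heq with ⟨e1, e2⟩ | ⟨e1, e2⟩ <;>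
        exact absurd (e1.trans e2.symm) hne'
    · exact absurd (dl hq0 hq1 hξ hξ hη hΛ heq) not_false
  · rcases h2 with ⟨η, hη, rfl⟩ | ⟨η1, η2, hη1, hη2, hne', rfl⟩ | ⟨η, hη, rfl⟩
    · rcases dd hq0 hq1 hξ1 hξ2 hη hη hΛ heq with ⟨e1, e2⟩ | ⟨e1, e2⟩
      · exact absurd (e1.symm.trans e2) hne
      · exact absurd (e2.symm.trans e1) hne
    · rcases dd hq0 hq1 hξ1 hξ2 hη1 hη2 hΛ heq with ⟨e1, e2⟩ | ⟨e1, e2⟩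
      · exact Or.inl (by rw [e1, e2])
      · exact Or.inr ⟨ξ1, ξ2, hne, rfl, by rw [e1, e2]⟩
    · exact absurd (dl hq0 hq1 hξ1 hξ2 hη hΛ heq) not_false
  · rcases h2 with ⟨η, hη, rfl⟩ | ⟨η1, η2, hη1, hη2, hne', rfl⟩ | ⟨η, hη, rfl⟩
    · exact absurd (ld hq0 hq1 hξ hη hη hΛ heq) not_false
    · exact absurd (ld hq0 hq1 hξ hη1 hη2 hΛ heq) not_false
    · exact Or.inl (by rw [ll hq0 hq1 hξ hη hΛ heq])

end Helpers13

/-- Normal forms for the central factor, existence and uniqueness up to swapping the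
diagonal entries in the generic form. -/
theorem stmt13 (q : ℂ) (hq0 : 0 < ‖q‖) (hq1 : ‖q‖ < 1) :
    (∀ C : Matrix (Fin 2) (Fin 2) ℂ, IsUnit C.det →
      ∃ C0, NormalForm q C0 ∧ GaugeEq q C C0) ∧
    (∀ C0 C0' : Matrix (Fin 2) (Fin 2) ℂ, NormalForm q C0 → NormalForm q C0' →
      GaugeEq q C0 C0' →
      C0' = C0 ∨ ∃ ξ1 ξ2 : ℂ, ξ1 ≠ ξ2 ∧ C0 = Matrix.diagonal ![ξ1, ξ2] ∧
        C0' = Matrix.diagonal ![ξ2, ξ1]) := by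
  exact ⟨fun C hC => existence13 hq0 hq1 C hC,
    fun C0 C0' h1 h2 h3 => uniqueness13 hq0 hq1 C0 C0' h1 h2 h3⟩
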